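/- arXiv:0808.0750 — 2 statements merged into one kernel-verified Lean document; each statement's English description precedes it below -/
import Mathlib

section
/- Let (Ω, F, P) be a probability space and W : ℝ≥0 → Ω → ℝ a measurable process such that: (i) W(0) = 0; (ii) for all 0 ≤ s ≤ t, the increment W(t) − W(s) has law gaussianReal 0 (t − s); (iii) for every finite increasing sequence of times 0 ≤ t₀ ≤ t₁ ≤ ⋯ ≤ tₙ, the increments W(t₁) − W(t₀), …, W(tₙ) − W(tₙ₋₁) are independent; (iv) almost every sample path t ↦ W(t,ω) is continuous. Then almost surely W(t,ω)/t → 0 as t → ∞. -/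
open Filter Topology MeasureTheory ProbabilityTheory NNReal ENNReal Real


lemma gauss_tail_Ici (v : ℝ≥0) (hv : v ≠ 0) {a : ℝ} (ha : 0 ≤ a) :
    gaussianReal 0 v (Set.Ici a) ≤ ENNReal.ofReal (Real.exp (-a ^ 2 / (2 * v))) := by
  have hv' : (0 : ℝ) < v := lt_of_le_of_ne v.coe_nonneg (by exact_mod_cast hv.symm)
  rw [gaussianReal_apply_eq_integral _ hv]
  apply ENNReal.ofReal_le_ofReal
  have h1 : ∀ x ∈ Set.Ici a, gaussianPDFReal 0 v x ≤
      Real.exp (-a ^ 2 / (2 * v)) * gaussianPDFReal a v x := by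
    intro x hx
    simp only [Set.mem_Ici] at hx
    simp only [gaussianPDFReal, sub_zero]
    rw [mul_comm (Real.exp _), mul_assoc _ (Real.exp _) (Real.exp _), ← Real.exp_add, add_comm]
    refine mul_le_mul_of_nonneg_left (Real.exp_le_exp.2 ?_) (by positivity)
    rw [← add_div]
    apply div_le_div_of_nonneg_right _ (by positivity)
    nlinarith [mul_nonneg ha (sub_nonneg.2 hx)]
  calc ∫ x in Set.Ici a, gaussianPDFReal 0 v x
      ≤ ∫ x in Set.Ici a, Real.exp (-a ^ 2 / (2 * v)) * gaussianPDFReal a v x := by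
        refine setIntegral_mono_on ((integrable_gaussianPDFReal 0 v).restrict)
          (((integrable_gaussianPDFReal a v).const_mul _).restrict) measurableSet_Ici h1
    _ ≤ ∫ x, Real.exp (-a ^ 2 / (2 * v)) * gaussianPDFReal a v x := by
        refine setIntegral_le_integral ((integrable_gaussianPDFReal a v).const_mul _)
          (ae_of_all _ fun x => mul_nonneg (Real.exp_nonneg _) (gaussianPDFReal_nonneg _ _ _))
    _ = Real.exp (-a ^ 2 / (2 * v)) := by
        rw [integral_const_mul, integral_gaussianPDFReal_eq_one a hv, mul_one]

lemma gauss_tail_abs (v : ℝ≥0) (hv : v ≠ 0) {a : ℝ} (ha : 0 ≤ a) :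
    gaussianReal 0 v {x | a ≤ |x|} ≤ ENNReal.ofReal (2 * Real.exp (-a ^ 2 / (2 * v))) := by
  have hsub : {x : ℝ | a ≤ |x|} ⊆ Set.Ici a ∪ Set.Iic (-a) := by
    intro x hx
    simp only [Set.mem_setOf_eq] at hx
    rcases abs_cases x with ⟨h, _⟩ | ⟨h, _⟩
    · exact Or.inl (by simpa [Set.mem_Ici] using h ▸ hx)
    · exact Or.inr (by simp only [Set.mem_Iic]; linarith [h ▸ hx])
  have hIic : gaussianReal 0 v (Set.Iic (-a)) = gaussianReal 0 v (Set.Ici a) := by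
    have hmap := gaussianReal_map_const_mul (μ := 0) (v := v) (-1)
    have h1 : (⟨(-1 : ℝ) ^ 2, sq_nonneg _⟩ : ℝ≥0) = 1 := by ext; norm_num
    replace hmap := hmap.trans (by rw [mul_zero]; congr 1; ext; simp : _ = gaussianReal 0 v)
    conv_lhs => rw [← hmap]
    rw [Measure.map_apply (measurable_const_mul _) measurableSet_Iic]
    congr 1
    ext x
    simp only [Set.mem_preimage, Set.mem_Iic, Set.mem_Ici]
    constructor <;> intro h <;> linarith
  calc gaussianReal 0 v {x | a ≤ |x|} ≤ gaussianReal 0 v (Set.Ici a ∪ Set.Iic (-a)) :=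
        measure_mono hsub
    _ ≤ gaussianReal 0 v (Set.Ici a) + gaussianReal 0 v (Set.Iic (-a)) := measure_union_le _ _
    _ = gaussianReal 0 v (Set.Ici a) + gaussianReal 0 v (Set.Ici a) := by rw [hIic]
    _ ≤ ENNReal.ofReal (Real.exp (-a ^ 2 / (2 * v))) +
        ENNReal.ofReal (Real.exp (-a ^ 2 / (2 * v))) := by
        gcongr <;> exact gauss_tail_Ici v hv ha
    _ = ENNReal.ofReal (2 * Real.exp (-a ^ 2 / (2 * v))) := by
        rw [← ENNReal.ofReal_add (by positivity) (by positivity)]; ring_nf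


lemma pdf_mul_id_eq (v : ℝ≥0) :
    (fun x : ℝ => gaussianPDFReal 0 v x * x) =
      fun x : ℝ => (√(2 * π * v))⁻¹ * (x * Real.exp (-(2 * v : ℝ)⁻¹ * x ^ 2)) := by
  funext x
  simp only [gaussianPDFReal, sub_zero]
  rw [neg_div, div_eq_inv_mul, ← neg_mul]
  ring

lemma integrable_pdf_mul_id (v : ℝ≥0) (hv : v ≠ 0) :
    Integrable (fun x : ℝ => gaussianPDFReal 0 v x * x) := by
  have hv' : (0 : ℝ) < v := lt_of_le_of_ne v.coe_nonneg (by exact_mod_cast hv.symm)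
  have hb : (0 : ℝ) < (2 * (v : ℝ))⁻¹ := by positivity
  rw [pdf_mul_id_eq]
  exact (integrable_mul_exp_neg_mul_sq hb).const_mul _

lemma integrable_id_gauss (v : ℝ≥0) (hv : v ≠ 0) :
    Integrable (fun x : ℝ => x) (gaussianReal 0 v) := by
  rw [gaussianReal_of_var_ne_zero _ hv, gaussianPDF_def]
  have hmeas : Measurable fun x : ℝ => (gaussianPDFReal 0 v x).toNNReal :=
    (measurable_gaussianPDFReal 0 v).real_toNNReal
  have hrw : (fun x : ℝ => ENNReal.ofReal (gaussianPDFReal 0 v x)) =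
      fun x : ℝ => (↑(gaussianPDFReal 0 v x).toNNReal : ℝ≥0∞) := rfl
  rw [hrw]
  rw [integrable_withDensity_iff_integrable_coe_smul hmeas]
  refine (integrable_pdf_mul_id v hv).congr (ae_of_all _ fun x => ?_)
  simp only [NNReal.smul_def, smul_eq_mul, Real.coe_toNNReal _ (gaussianPDFReal_nonneg 0 v x)]

lemma integral_id_gauss (v : ℝ≥0) (hv : v ≠ 0) :
    ∫ x, x ∂(gaussianReal 0 v) = 0 := by
  rw [gaussianReal_of_var_ne_zero _ hv, gaussianPDF_def]
  have hmeas : Measurable fun x : ℝ => (gaussianPDFReal 0 v x).toNNReal :=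
    (measurable_gaussianPDFReal 0 v).real_toNNReal
  have hrw : (fun x : ℝ => ENNReal.ofReal (gaussianPDFReal 0 v x)) =
      fun x : ℝ => (↑(gaussianPDFReal 0 v x).toNNReal : ℝ≥0∞) := rfl
  rw [hrw]
  rw [integral_withDensity_eq_integral_smul hmeas]
  have heq : ∀ x : ℝ, (gaussianPDFReal 0 v x).toNNReal • x = gaussianPDFReal 0 v x * x :=
    fun x => by
      simp only [NNReal.smul_def, smul_eq_mul, Real.coe_toNNReal _ (gaussianPDFReal_nonneg 0 v x)]
  simp_rw [heq]
  have hodd : ∀ x : ℝ, gaussianPDFReal 0 v (-x) * (-x) = -(gaussianPDFReal 0 v x * x) := by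
    intro x
    simp only [gaussianPDFReal, sub_zero, neg_sq]
    ring
  have h1 : ∫ x : ℝ, gaussianPDFReal 0 v x * x =
      ∫ x : ℝ, gaussianPDFReal 0 v (-x) * (-x) :=
    (integral_neg_eq_self (fun x : ℝ => gaussianPDFReal 0 v x * x) volume).symm
  simp_rw [hodd] at h1
  rw [integral_neg] at h1
  linarith

lemma brownian_slln {Ω : Type*} [MeasurableSpace Ω]
    (P : Measure Ω) [IsProbabilityMeasure P] (W : ℝ≥0 → Ω → ℝ)
    (hmeas : ∀ t, Measurable (W t))
    (h0 : ∀ ω, W 0 ω = 0)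
    (hincr : ∀ s t : ℝ≥0, s ≤ t →
      Measure.map (fun ω => W t ω - W s ω) P = gaussianReal 0 (t - s))
    (hindep : ∀ (n : ℕ) (ts : Fin (n + 1) → ℝ≥0), Monotone ts →
      iIndepFun
        (fun i : Fin n => fun ω => W (ts i.succ) ω - W (ts i.castSucc) ω) P) :
    ∀ᵐ ω ∂P, Tendsto (fun n : ℕ => W (n : ℝ≥0) ω / (n : ℝ)) atTop (𝓝 0) := by
  set X : ℕ → Ω → ℝ := fun i ω => W ((i : ℝ≥0) + 1) ω - W (i : ℝ≥0) ω with hX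
  have hXmeas : ∀ i, Measurable (X i) := fun i => (hmeas _).sub (hmeas _)
  have hlaw : ∀ i : ℕ, Measure.map (X i) P = gaussianReal 0 1 := by
    intro i
    have h := hincr (i : ℝ≥0) ((i : ℝ≥0) + 1) le_self_add
    rwa [add_tsub_cancel_left] at h
  have hint : Integrable (X 0) P := by
    have h := (integrable_map_measure (aestronglyMeasurable_id)
      (hXmeas 0).aemeasurable (f := X 0) (μ := P)).1
    rw [hlaw 0] at h
    exact h (integrable_id_gauss 1 one_ne_zero)
  have hident : ∀ i, IdentDistrib (X i) (X 0) P P := fun i =>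
    ⟨(hXmeas i).aemeasurable, (hXmeas 0).aemeasurable, by rw [hlaw i, hlaw 0]⟩
  have hpair : Pairwise (Function.onFun (IndepFun · · P) X) := by
    have key : ∀ i j : ℕ, i < j → IndepFun (X i) (X j) P := by
      intro i j hij
      have h12 : (i : ℝ≥0) + 1 ≤ (j : ℝ≥0) := by
        have : ((i + 1 : ℕ) : ℝ≥0) ≤ (j : ℕ) := by exact_mod_cast Nat.succ_le_of_lt hij
        push_cast at this
        exact this
      set ts : Fin 4 → ℝ≥0 := ![(i : ℝ≥0), (i : ℝ≥0) + 1, (j : ℝ≥0), (j : ℝ≥0) + 1] with hts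
      have hmono : Monotone ts := by
        rw [Fin.monotone_iff_le_succ]
        intro k
        have h01 : (i : ℝ≥0) ≤ (i : ℝ≥0) + 1 := le_self_add
        have h23 : (j : ℝ≥0) ≤ (j : ℝ≥0) + 1 := le_self_add
        fin_cases k <;> simp_all [ts, Fin.succ, Fin.castSucc, Fin.castAdd, Fin.castLE]
      have h := (hindep 3 ts hmono).indepFun (i := (0 : Fin 3)) (j := (2 : Fin 3)) (by decide)
      have e0 : (fun ω => W (ts (0 : Fin 3).succ) ω - W (ts (0 : Fin 3).castSucc) ω) = X i := rfl
      have e2 : (fun ω => W (ts (2 : Fin 3).succ) ω - W (ts (2 : Fin 3).castSucc) ω) = X j := rfl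
      rwa [e0, e2] at h
    intro i j hij
    rcases lt_or_gt_of_ne hij with h | h
    · exact key i j h
    · exact (key j i h).symm
  have hmean : P[X 0] = 0 := by
    have : P[X 0] = ∫ x, x ∂(Measure.map (X 0) P) :=
      (integral_map (hXmeas 0).aemeasurable aestronglyMeasurable_id).symm
    rw [this, hlaw 0, integral_id_gauss 1 one_ne_zero]
  have := strong_law_ae_real X hint hpair hident
  rw [hmean] at this
  filter_upwards [this] with ω hω
  have htel : ∀ n : ℕ, ∑ i ∈ Finset.range n, X i ω = W (n : ℝ≥0) ω := by
    intro n
    have : ∀ i : ℕ, X i ω = W (((i + 1 : ℕ)) : ℝ≥0) ω - W ((i : ℝ≥0)) ω := by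
      intro i; push_cast; rfl
    calc ∑ i ∈ Finset.range n, X i ω
        = ∑ i ∈ Finset.range n, (W (((i + 1 : ℕ)) : ℝ≥0) ω - W ((i : ℝ≥0)) ω) := by
          exact Finset.sum_congr rfl fun i _ => this i
      _ = W ((n : ℕ) : ℝ≥0) ω - W ((0 : ℕ) : ℝ≥0) ω :=
          Finset.sum_range_sub (fun i : ℕ => W ((i : ℕ) : ℝ≥0) ω) n
      _ = W (n : ℝ≥0) ω := by simp [h0]
  simpa only [htel] using hω


lemma chain_bound (f : ℝ≥0 → ℝ) (hf : Continuous f) (n : ℕ) (C : ℝ) (hC : 0 ≤ C)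
    (h : ∀ k j : ℕ, j < 2 ^ k →
      |f ((n : ℝ≥0) + ((j : ℝ≥0) + 1) / 2 ^ k) - f ((n : ℝ≥0) + (j : ℝ≥0) / 2 ^ k)| ≤
        (4 / 5 : ℝ) ^ k * C)
    {t : ℝ≥0} (ht1 : (n : ℝ≥0) ≤ t) (ht2 : t ≤ (n : ℝ≥0) + 1) :
    |f t - f (n : ℝ≥0)| ≤ 5 * C := by
  -- geometric sums are at most 5
  have hgeom : ∀ M : ℕ, ∑ k ∈ Finset.range M, (4 / 5 : ℝ) ^ k ≤ 5 := by
    intro M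
    rw [geom_sum_eq (by norm_num : (4 / 5 : ℝ) ≠ 1)]
    have h1 : (0 : ℝ) ≤ (4 / 5 : ℝ) ^ M := by positivity
    have h2 : (4 / 5 : ℝ) ^ M ≤ 1 := pow_le_one₀ (by norm_num) (by norm_num)
    have : ((4 / 5 : ℝ) ^ M - 1) / (4 / 5 - 1) = (1 - (4 / 5 : ℝ) ^ M) * 5 := by ring
    rw [this]; nlinarith
  -- main claim at dyadic points, by induction on the level
  have claim : ∀ m : ℕ, ∀ j : ℕ, j ≤ 2 ^ m →
      |f ((n : ℝ≥0) + (j : ℝ≥0) / 2 ^ m) - f (n : ℝ≥0)| ≤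
        (∑ k ∈ Finset.range (m + 1), (4 / 5 : ℝ) ^ k) * C := by
    intro m
    induction m with
    | zero =>
      intro j hj
      interval_cases j
      · simpa using hC
      · simpa using h 0 0 (by norm_num)
    | succ m ih =>
      intro j hj
      rcases Nat.even_or_odd j with ⟨q, hq⟩ | ⟨q, hq⟩
      · -- even case : j = q + q
        have hq2 : q ≤ 2 ^ m := by
          subst hq; rw [pow_succ] at hj; omega
        have heq : ((j : ℝ≥0) / 2 ^ (m + 1)) = ((q : ℝ≥0) / 2 ^ m) := by
          subst hq; push_cast
          rw [pow_succ]
          rw [div_eq_div_iff (by positivity) (by positivity)]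
          ring
        rw [heq]
        refine (ih q hq2).trans ?_
        refine mul_le_mul_of_nonneg_right ?_ hC
        exact Finset.sum_le_sum_of_subset_of_nonneg
          (Finset.range_subset_range.2 (by omega)) (fun k _ _ => by positivity)
      · -- odd case : j = 2q+1
        have hq2 : q ≤ 2 ^ m := by subst hq; rw [pow_succ] at hj; omega
        have h2q : 2 * q < 2 ^ (m + 1) := by subst hq; omega
        have heq : (((2 * q : ℕ) : ℝ≥0) / 2 ^ (m + 1)) = ((q : ℝ≥0) / 2 ^ m) := by
          push_cast
          rw [pow_succ, div_eq_div_iff (by positivity) (by positivity)]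
          ring
        have hj' : ((j : ℝ≥0) / 2 ^ (m + 1)) = (((2 * q : ℕ) : ℝ≥0) + 1) / 2 ^ (m + 1) := by
          subst hq; push_cast; ring_nf
        have tri : |f ((n : ℝ≥0) + (j : ℝ≥0) / 2 ^ (m + 1)) - f (n : ℝ≥0)| ≤
            |f ((n : ℝ≥0) + (((2 * q : ℕ) : ℝ≥0) + 1) / 2 ^ (m + 1)) -
              f ((n : ℝ≥0) + ((2 * q : ℕ) : ℝ≥0) / 2 ^ (m + 1))| +
            |f ((n : ℝ≥0) + ((2 * q : ℕ) : ℝ≥0) / 2 ^ (m + 1)) - f (n : ℝ≥0)| := by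
          rw [hj']
          exact abs_sub_le _ (f ((n : ℝ≥0) + ((2 * q : ℕ) : ℝ≥0) / 2 ^ (m + 1))) _
        refine tri.trans ?_
        have hstep := h (m + 1) (2 * q) h2q
        have hrec : |f ((n : ℝ≥0) + ((2 * q : ℕ) : ℝ≥0) / 2 ^ (m + 1)) - f (n : ℝ≥0)| ≤
            (∑ k ∈ Finset.range (m + 1), (4 / 5 : ℝ) ^ k) * C := by
          rw [heq]; exact ih q hq2
        calc _ ≤ (4 / 5 : ℝ) ^ (m + 1) * C +
              (∑ k ∈ Finset.range (m + 1), (4 / 5 : ℝ) ^ k) * C := add_le_add hstep hrec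
          _ = (∑ k ∈ Finset.range (m + 2), (4 / 5 : ℝ) ^ k) * C := by
              conv_rhs => rw [Finset.sum_range_succ]
              ring
  -- now approximate t by dyadic points
  set x : ℝ := (t : ℝ) - n with hx
  have hx0 : 0 ≤ x := by
    rw [hx, sub_nonneg]; exact_mod_cast ht1
  have hx1 : x ≤ 1 := by
    rw [hx, sub_le_iff_le_add]
    have : (t : ℝ) ≤ ((n : ℝ≥0) : ℝ) + 1 := by exact_mod_cast ht2
    simpa [add_comm] using this
  set u : ℕ → ℝ≥0 := fun m => (n : ℝ≥0) + ((⌊x * 2 ^ m⌋₊ : ℝ≥0) / 2 ^ m) with hu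
  have hjle : ∀ m : ℕ, ⌊x * 2 ^ m⌋₊ ≤ 2 ^ m := by
    intro m
    have : x * 2 ^ m ≤ ((2 ^ m : ℕ) : ℝ) := by
      push_cast
      nlinarith [pow_pos (by norm_num : (0:ℝ) < 2) m]
    calc ⌊x * 2 ^ m⌋₊ ≤ ⌊((2 ^ m : ℕ) : ℝ)⌋₊ := Nat.floor_le_floor this
      _ = 2 ^ m := Nat.floor_natCast _
  have hbound : ∀ m : ℕ, |f (u m) - f (n : ℝ≥0)| ≤ 5 * C := by
    intro m
    refine (claim m _ (hjle m)).trans ?_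
    exact mul_le_mul_of_nonneg_right (hgeom _) hC
  -- u m → t
  have hulim : Tendsto u atTop (𝓝 t) := by
    rw [← NNReal.tendsto_coe (f := atTop) (m := u) (x := t)]
    have hcoe : ∀ m : ℕ, ((u m : ℝ≥0) : ℝ) = (n : ℝ) + (⌊x * 2 ^ m⌋₊ : ℝ) / 2 ^ m := by
      intro m; rw [hu]; push_cast; ring
    simp only [hcoe]
    have htarget : (t : ℝ) = (n : ℝ) + x := by rw [hx]; ring
    rw [htarget]
    refine Tendsto.const_add _ ?_
    -- squeeze
    have hle1 : ∀ m : ℕ, (⌊x * 2 ^ m⌋₊ : ℝ) / 2 ^ m ≤ x := by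
      intro m
      rw [div_le_iff₀ (by positivity)]
      exact Nat.floor_le (by positivity)
    have hle2 : ∀ m : ℕ, x - (1 / 2 : ℝ) ^ m ≤ (⌊x * 2 ^ m⌋₊ : ℝ) / 2 ^ m := by
      intro m
      have hpos : (0 : ℝ) < 2 ^ m := by positivity
      have hhalf : ((1 : ℝ) / 2) ^ m = 1 / 2 ^ m := by rw [div_pow, one_pow]
      rw [hhalf, sub_le_iff_le_add, ← add_div, le_div_iff₀ hpos]
      linarith [Nat.lt_floor_add_one (x * 2 ^ m)]
    have l1 : Tendsto (fun m : ℕ => x - (1 / 2 : ℝ) ^ m) atTop (𝓝 x) := by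
      have := tendsto_pow_atTop_nhds_zero_of_lt_one (by norm_num : (0:ℝ) ≤ 1/2)
        (by norm_num : (1/2 : ℝ) < 1)
      simpa using tendsto_const_nhds.sub this
    exact tendsto_of_tendsto_of_tendsto_of_le_of_le l1 tendsto_const_nhds hle2 hle1
  have hflim : Tendsto (fun m => |f (u m) - f (n : ℝ≥0)|) atTop (𝓝 (|f t - f (n : ℝ≥0)|)) :=
    (((hf.tendsto t).comp hulim).sub tendsto_const_nhds).abs
  exact le_of_tendsto hflim (Eventually.of_forall hbound)

section BadSet

variable {Ω : Type*} [MeasurableSpace Ω]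

/-- Bad event: some dyadic increment in `[n, n+1]` at level `k` exceeds `(4/5)^k * ε * n`. -/
def badSet (W : ℝ≥0 → Ω → ℝ) (ε : ℝ) (n : ℕ) : Set Ω :=
  ⋃ k : ℕ, ⋃ j ∈ Finset.range (2 ^ k),
    {ω | (4 / 5 : ℝ) ^ k * (ε * n) ≤
      |W ((n : ℝ≥0) + ((j : ℝ≥0) + 1) / 2 ^ k) ω - W ((n : ℝ≥0) + (j : ℝ≥0) / 2 ^ k) ω|}

lemma incr_tail (P : Measure Ω) [IsProbabilityMeasure P] (W : ℝ≥0 → Ω → ℝ)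
    (hmeas : ∀ t, Measurable (W t))
    (hincr : ∀ s t : ℝ≥0, s ≤ t →
      Measure.map (fun ω => W t ω - W s ω) P = gaussianReal 0 (t - s))
    {s t : ℝ≥0} (hst : s < t) {a : ℝ} (ha : 0 ≤ a) :
    P {ω | a ≤ |W t ω - W s ω|} ≤
      ENNReal.ofReal (2 * Real.exp (-a ^ 2 / (2 * ((t - s : ℝ≥0) : ℝ)))) := by
  have hg : Measurable fun ω => W t ω - W s ω := (hmeas t).sub (hmeas s)
  have hA : MeasurableSet {x : ℝ | a ≤ |x|} := by
    have : {x : ℝ | a ≤ |x|} = (fun x : ℝ => |x|) ⁻¹' Set.Ici a := rfl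
    rw [this]
    exact measurable_abs measurableSet_Ici
  have heq : {ω | a ≤ |W t ω - W s ω|} =
      (fun ω => W t ω - W s ω) ⁻¹' {x : ℝ | a ≤ |x|} := rfl
  rw [heq, ← Measure.map_apply hg hA, hincr s t hst.le]
  exact gauss_tail_abs _ (by simp [tsub_eq_zero_iff_le, not_le.2 hst]) ha

lemma badSet_tsum_ne_top (P : Measure Ω) [IsProbabilityMeasure P] (W : ℝ≥0 → Ω → ℝ)
    (hmeas : ∀ t, Measurable (W t))
    (hincr : ∀ s t : ℝ≥0, s ≤ t →
      Measure.map (fun ω => W t ω - W s ω) P = gaussianReal 0 (t - s))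
    {ε : ℝ} (hε : 0 < ε) :
    ∑' n : ℕ, P (badSet W ε n) ≠ ⊤ := by
  set A : ℝ := ε ^ 2 / 2 with hAdef
  have hA : 0 < A := by positivity
  set n₀ : ℕ := max 1 ⌈4 * Real.log 4 / A⌉₊ with hn₀def
  -- key estimate for n ≥ n₀
  have hkey : ∀ n : ℕ, n₀ ≤ n → P (badSet W ε n) ≤ ENNReal.ofReal (8 * Real.exp (-(A * n))) := by
    intro n hn
    have hn1 : 1 ≤ n := le_trans (le_max_left _ _) hn
    have hn1' : (1 : ℝ) ≤ n := by exact_mod_cast hn1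
    have hlog : 4 * Real.log 4 ≤ A * n := by
      have h1 : (⌈4 * Real.log 4 / A⌉₊ : ℝ) ≤ n := by
        exact_mod_cast le_trans (le_max_right _ _) hn
      have h2 : 4 * Real.log 4 / A ≤ n := (Nat.le_ceil _).trans h1
      rw [div_le_iff₀ hA] at h2; linarith
    set γ : ℝ := A * (n : ℝ) ^ 2 with hγdef
    have hγ0 : 0 ≤ γ := by positivity
    have hγA : A * n ≤ γ := by rw [hγdef]; nlinarith
    have hγlog : 4 * Real.log 4 ≤ γ := hlog.trans hγA
    -- per-increment tail bound
    have hterm : ∀ k j : ℕ, j < 2 ^ k →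
        P {ω | (4 / 5 : ℝ) ^ k * (ε * n) ≤
          |W ((n : ℝ≥0) + ((j : ℝ≥0) + 1) / 2 ^ k) ω - W ((n : ℝ≥0) + (j : ℝ≥0) / 2 ^ k) ω|} ≤
        ENNReal.ofReal (2 * Real.exp (-(γ * (32 / 25 : ℝ) ^ k))) := by
      intro k j hj
      have hst : (n : ℝ≥0) + (j : ℝ≥0) / 2 ^ k < (n : ℝ≥0) + ((j : ℝ≥0) + 1) / 2 ^ k := by
        apply (add_lt_add_iff_left _).2
        rw [div_lt_div_iff_of_pos_right (by positivity)]
        exact lt_add_one _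
      have ha : (0 : ℝ) ≤ (4 / 5 : ℝ) ^ k * (ε * n) := by positivity
      have hsub : ((n : ℝ≥0) + ((j : ℝ≥0) + 1) / 2 ^ k) - ((n : ℝ≥0) + (j : ℝ≥0) / 2 ^ k)
          = 1 / 2 ^ k := by
        rw [add_tsub_add_eq_tsub_left, ← tsub_div, add_tsub_cancel_left]
      have h := incr_tail P W hmeas hincr hst ha
      rw [hsub] at h
      refine h.trans (ENNReal.ofReal_le_ofReal ?_)
      have hcoe : ((1 / 2 ^ k : ℝ≥0) : ℝ) = 1 / 2 ^ k := by push_cast; ring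
      rw [hcoe]
      apply mul_le_mul_of_nonneg_left _ (by norm_num)
      apply Real.exp_le_exp.2
      apply le_of_eq
      have h2k : ((2:ℝ)^k) ≠ 0 := by positivity
      have h3 : ((4/5:ℝ)^k)^2 * (2:ℝ)^k = (32/25:ℝ)^k := by
        rw [← pow_mul, mul_comm k 2, pow_mul,
          show ((4/5:ℝ)^2) = 16/25 by norm_num,
          show (32/25:ℝ) = (16/25)*2 by norm_num, mul_pow]
      have h5 : (4:ℝ)^(k*2) * 2^k * 25^k = 5^(k*2) * 32^k := by
        rw [mul_comm k 2, pow_mul, pow_mul,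
          show ((4:ℝ)^2) = 16 by norm_num, show ((5:ℝ)^2) = 25 by norm_num,
          ← mul_pow, show (16:ℝ)*2 = 32 by norm_num]
        ring
      field_simp
      linear_combination (-(ε^2*(n:ℝ)^2)) * h3
    -- union bound
    have hunion : P (badSet W ε n) ≤
        ∑' k : ℕ, (2 ^ k : ℝ≥0∞) * ENNReal.ofReal (2 * Real.exp (-(γ * (32 / 25 : ℝ) ^ k))) := by
      refine (measure_iUnion_le _).trans ?_
      refine ENNReal.tsum_le_tsum fun k => ?_
      refine (measure_biUnion_finset_le _ _).trans ?_
      calc ∑ j ∈ Finset.range (2 ^ k), P {ω | (4 / 5 : ℝ) ^ k * (ε * n) ≤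
            |W ((n : ℝ≥0) + ((j : ℝ≥0) + 1) / 2 ^ k) ω - W ((n : ℝ≥0) + (j : ℝ≥0) / 2 ^ k) ω|}
          ≤ ∑ _j ∈ Finset.range (2 ^ k),
              ENNReal.ofReal (2 * Real.exp (-(γ * (32 / 25 : ℝ) ^ k))) :=
            Finset.sum_le_sum fun j hj => hterm k j (Finset.mem_range.1 hj)
        _ = (2 ^ k : ℝ≥0∞) * ENNReal.ofReal (2 * Real.exp (-(γ * (32 / 25 : ℝ) ^ k))) := by
            rw [Finset.sum_const, Finset.card_range, nsmul_eq_mul]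
            norm_cast
    -- real per-level estimate
    have hreal : ∀ k : ℕ, (2 : ℝ) ^ k * (2 * Real.exp (-(γ * (32 / 25 : ℝ) ^ k))) ≤
        (4 * Real.exp (-(A * n))) * ((1 : ℝ) / 2) ^ k := by
      intro k
      have hk0 : (0 : ℝ) ≤ (k : ℝ) := Nat.cast_nonneg k
      have hb : 1 + (k : ℝ) / 4 ≤ (32 / 25 : ℝ) ^ k := by
        have h7 := one_add_mul_le_pow (by norm_num : (-2 : ℝ) ≤ 7 / 25) k
        calc 1 + (k : ℝ) / 4 ≤ 1 + (k : ℝ) * (7 / 25) := by nlinarith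
          _ ≤ (1 + 7 / 25 : ℝ) ^ k := h7
          _ = (32 / 25 : ℝ) ^ k := by norm_num
      have hmono : Real.exp (-(γ * (32 / 25 : ℝ) ^ k)) ≤
          Real.exp (-(γ * (1 + (k : ℝ) / 4))) :=
        Real.exp_le_exp.2 (neg_le_neg (mul_le_mul_of_nonneg_left hb hγ0))
      have h4k : (4 : ℝ) ^ k ≤ Real.exp (γ * ((k : ℝ) / 4)) := by
        have hlog4 : Real.log 4 ≤ γ / 4 := by linarith
        calc (4 : ℝ) ^ k = Real.exp (Real.log 4) ^ k := by rw [Real.exp_log (by norm_num)]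
          _ = Real.exp ((k : ℝ) * Real.log 4) := (Real.exp_nat_mul _ k).symm
          _ ≤ Real.exp (γ * ((k : ℝ) / 4)) := by
              apply Real.exp_le_exp.2
              nlinarith
      have e1 : Real.exp (γ * ((k : ℝ) / 4)) * Real.exp (-(γ * (1 + (k : ℝ) / 4)))
          = Real.exp (-γ) := by rw [← Real.exp_add]; congr 1; ring
      have e2 : (4 : ℝ) ^ k * Real.exp (-(γ * (32 / 25 : ℝ) ^ k)) ≤ Real.exp (-γ) := by
        calc (4 : ℝ) ^ k * Real.exp (-(γ * (32 / 25 : ℝ) ^ k))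
            ≤ Real.exp (γ * ((k : ℝ) / 4)) * Real.exp (-(γ * (1 + (k : ℝ) / 4))) :=
              mul_le_mul h4k hmono (Real.exp_nonneg _) (Real.exp_nonneg _)
          _ = Real.exp (-γ) := e1
      have e3 : Real.exp (-γ) ≤ Real.exp (-(A * n)) := Real.exp_le_exp.2 (by linarith)
      have h4keq : (4 : ℝ) ^ k = 2 ^ k * 2 ^ k := by rw [← mul_pow]; norm_num
      rw [show ((1 : ℝ) / 2) ^ k = 1 / 2 ^ k from by rw [div_pow, one_pow], mul_one_div,
        le_div_iff₀ (by positivity : (0 : ℝ) < 2 ^ k)]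
      nlinarith [Real.exp_nonneg (-(γ * (32 / 25 : ℝ) ^ k)), Real.exp_nonneg (-(A * (n : ℝ)))]
    -- put the two together
    have hk2 : ∀ k : ℕ, (2 ^ k : ℝ≥0∞) * ENNReal.ofReal (2 * Real.exp (-(γ * (32 / 25 : ℝ) ^ k)))
        ≤ ENNReal.ofReal ((4 * Real.exp (-(A * n))) * ((1 : ℝ) / 2) ^ k) := by
      intro k
      have : (2 ^ k : ℝ≥0∞) = ENNReal.ofReal ((2 : ℝ) ^ k) := by
        rw [ENNReal.ofReal_pow (by norm_num)]
        norm_num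
      rw [this, ← ENNReal.ofReal_mul (by positivity)]
      exact ENNReal.ofReal_le_ofReal (hreal k)
    calc P (badSet W ε n) ≤ ∑' k : ℕ, (2 ^ k : ℝ≥0∞) *
          ENNReal.ofReal (2 * Real.exp (-(γ * (32 / 25 : ℝ) ^ k))) := hunion
      _ ≤ ∑' k : ℕ, ENNReal.ofReal ((4 * Real.exp (-(A * n))) * ((1 : ℝ) / 2) ^ k) :=
          ENNReal.tsum_le_tsum hk2
      _ = ENNReal.ofReal (4 * Real.exp (-(A * n))) * ∑' k : ℕ, (2 : ℝ≥0∞)⁻¹ ^ k := by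
          have : ∀ k : ℕ, ENNReal.ofReal ((4 * Real.exp (-(A * n))) * ((1 : ℝ) / 2) ^ k)
              = ENNReal.ofReal (4 * Real.exp (-(A * n))) * (2 : ℝ≥0∞)⁻¹ ^ k := by
            intro k
            rw [ENNReal.ofReal_mul (by positivity), ENNReal.ofReal_pow (by norm_num)]
            congr 2
            rw [show ((1 : ℝ) / 2) = (2 : ℝ)⁻¹ by norm_num,
              ENNReal.ofReal_inv_of_pos (by norm_num)]
            norm_num
          simp_rw [this]
          rw [ENNReal.tsum_mul_left]
      _ ≤ ENNReal.ofReal (8 * Real.exp (-(A * n))) := by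
          rw [ENNReal.tsum_geometric, ENNReal.one_sub_inv_two, inv_inv]
          rw [show (2 : ℝ≥0∞) = ENNReal.ofReal 2 by norm_num,
            ← ENNReal.ofReal_mul (by positivity)]
          apply ENNReal.ofReal_le_ofReal
          nlinarith [Real.exp_nonneg (-(A * (n : ℝ)))]
  -- now sum over n
  have hbound : ∀ n : ℕ, P (badSet W ε n) ≤
      Set.indicator (↑(Finset.range n₀)) (fun _ => (1 : ℝ≥0∞)) n
        + ENNReal.ofReal (8 * Real.exp (-(A * n))) := by
    intro n
    rcases lt_or_ge n n₀ with h | h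
    · rw [Set.indicator_of_mem (by simpa using h)]
      exact le_add_right prob_le_one
    · rw [Set.indicator_of_notMem (by simpa using not_lt.2 h), zero_add]
      exact hkey n h
  refine ne_top_of_le_ne_top ?_ (ENNReal.tsum_le_tsum hbound)
  rw [ENNReal.tsum_add]
  refine ENNReal.add_ne_top.2 ⟨?_, ?_⟩
  · rw [tsum_eq_sum (s := Finset.range n₀)
      (fun b hb => Set.indicator_of_notMem (by simpa using hb) _)]
    refine (ENNReal.sum_lt_top.2 fun i _ => ?_).ne
    have hle : Set.indicator (↑(Finset.range n₀)) (fun _ => (1 : ℝ≥0∞)) i ≤ 1 :=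
      Set.indicator_le' (fun _ _ => le_rfl) (fun _ _ => zero_le_one) i
    exact lt_of_le_of_lt hle ENNReal.one_lt_top
  · have hrw : ∀ n : ℕ, ENNReal.ofReal (8 * Real.exp (-(A * n)))
        = ENNReal.ofReal 8 * ENNReal.ofReal (Real.exp (-A)) ^ n := by
      intro n
      rw [ENNReal.ofReal_mul (by norm_num), ← ENNReal.ofReal_pow (Real.exp_nonneg _)]
      congr 2
      rw [← Real.exp_nat_mul]
      congr 1
      ring
    simp_rw [hrw]
    rw [ENNReal.tsum_mul_left, ENNReal.tsum_geometric]
    refine ENNReal.mul_ne_top ENNReal.ofReal_ne_top ?_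
    rw [Ne, ENNReal.inv_eq_top, tsub_eq_zero_iff_le]
    exact not_le.2 (ENNReal.ofReal_lt_one.2 (Real.exp_lt_one_iff.2 (by linarith)))

end BadSet


/-- Strong law for Brownian motion: `W(t)/t → 0` almost surely as `t → ∞`. -/
theorem brownian_strong_law {Ω : Type*} [MeasurableSpace Ω]
    (P : Measure Ω) [IsProbabilityMeasure P] (W : ℝ≥0 → Ω → ℝ)
    (hmeas : ∀ t, Measurable (W t))
    (h0 : ∀ ω, W 0 ω = 0)
    (hincr : ∀ s t : ℝ≥0, s ≤ t →
      Measure.map (fun ω => W t ω - W s ω) P = gaussianReal 0 (t - s))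
    (hindep : ∀ (n : ℕ) (ts : Fin (n + 1) → ℝ≥0), Monotone ts →
      iIndepFun
        (fun i : Fin n => fun ω => W (ts i.succ) ω - W (ts i.castSucc) ω) P)
    (hcont : ∀ᵐ ω ∂P, Continuous fun t => W t ω) :
    ∀ᵐ ω ∂P, Tendsto (fun t : ℝ≥0 => W t ω / (t : ℝ)) atTop (𝓝 0) := by
  have hslln := brownian_slln P W hmeas h0 hincr hindep
  have hosc : ∀ᵐ ω ∂P, ∀ m : ℕ, ∀ᶠ n : ℕ in atTop, ω ∉ badSet W (1 / ((m : ℝ) + 1)) n := by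
    rw [ae_all_iff]
    intro m
    exact ae_eventually_notMem
      (badSet_tsum_ne_top P W hmeas hincr (by positivity : (0 : ℝ) < 1 / ((m : ℝ) + 1)))
  filter_upwards [hcont, hslln, hosc] with ω hcω hWn hbad
  rw [Metric.tendsto_atTop]
  intro ε hε
  obtain ⟨m, hm⟩ := exists_nat_one_div_lt (show (0 : ℝ) < ε / 6 by linarith)
  set δ : ℝ := 1 / ((m : ℝ) + 1) with hδdef
  have hδpos : 0 < δ := by positivity
  have hδε : 6 * δ < ε := by
    have : δ < ε / 6 := hm
    linarith
  have h1 : ∀ᶠ n : ℕ in atTop, dist (W (n : ℝ≥0) ω / (n : ℝ)) 0 < δ :=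
    Metric.tendsto_nhds.1 hWn δ hδpos
  obtain ⟨N₁, hN₁⟩ := eventually_atTop.1 h1
  obtain ⟨N₂, hN₂⟩ := eventually_atTop.1 (hbad m)
  refine ⟨((max (max N₁ N₂) 1 + 1 : ℕ) : ℝ≥0), fun t ht => ?_⟩
  set n : ℕ := ⌊t⌋₊ with hn
  have hn1 : (n : ℝ≥0) ≤ t := Nat.floor_le (by simp)
  have hn2 : t ≤ (n : ℝ≥0) + 1 := (Nat.lt_floor_add_one t).le
  have hnge : max (max N₁ N₂) 1 + 1 ≤ n := Nat.le_floor ht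
  have hnN₁ : N₁ ≤ n := by omega
  have hnN₂ : N₂ ≤ n := by omega
  have hn1' : 1 ≤ n := by omega
  have hnpos : (0 : ℝ) < (n : ℝ) := by exact_mod_cast hn1'
  -- bound on `|W n ω|`
  have hWnb : |W (n : ℝ≥0) ω| ≤ δ * n := by
    have h := hN₁ n hnN₁
    rw [Real.dist_eq, sub_zero, abs_div, abs_of_pos hnpos] at h
    rw [div_lt_iff₀ hnpos] at h
    linarith
  -- oscillation bound via chaining
  have hoscn : ∀ k j : ℕ, j < 2 ^ k →
      |W ((n : ℝ≥0) + ((j : ℝ≥0) + 1) / 2 ^ k) ω - W ((n : ℝ≥0) + (j : ℝ≥0) / 2 ^ k) ω| ≤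
        (4 / 5 : ℝ) ^ k * (δ * n) := by
    intro k j hj
    by_contra hcon
    push_neg at hcon
    exact hN₂ n hnN₂
      (Set.mem_iUnion.2 ⟨k, Set.mem_iUnion₂.2 ⟨j, Finset.mem_range.2 hj, hcon.le⟩⟩)
  have hchain := chain_bound (fun s => W s ω) hcω n (δ * n) (by positivity) hoscn hn1 hn2
  -- final estimate
  have htpos : (0 : ℝ) < (t : ℝ) := lt_of_lt_of_le hnpos (by exact_mod_cast hn1)
  have hnt : (n : ℝ) ≤ (t : ℝ) := by exact_mod_cast hn1
  have hWt : |W t ω| ≤ 6 * δ * n := by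
    calc |W t ω| ≤ |W t ω - W (n : ℝ≥0) ω| + |W (n : ℝ≥0) ω| := by
          have := abs_sub_abs_le_abs_sub (W t ω) (W (n : ℝ≥0) ω)
          have h2 := abs_add_le (W t ω - W (n : ℝ≥0) ω) (W (n : ℝ≥0) ω)
          simpa using h2.trans_eq' (by ring_nf)
      _ ≤ 5 * (δ * n) + δ * n := add_le_add hchain hWnb
      _ = 6 * δ * n := by ring
  rw [Real.dist_eq, sub_zero, abs_div, abs_of_pos htpos, div_lt_iff₀ htpos]
  have hδn : (0 : ℝ) ≤ 6 * δ := by linarith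
  calc |W t ω| ≤ 6 * δ * n := hWt
    _ ≤ 6 * δ * t := by nlinarith
    _ < ε * t := by nlinarith
end

section
/- Let (Ω, F, P) be a probability space and W : ℝ≥0 → Ω → ℝ a process such that: (i) for all 0 ≤ s ≤ t, the increment W(t) − W(s) has law gaussianReal 0 (t − s); (ii) for every finite increasing sequence of times the corresponding increments are independent. Fix T > 0 and for n ≥ 1 let Q_n := Σ_{j=0}^{n−1} (W((j+1)T/n) − W(jT/n))². Then E[(Q_n − T)²] = 2T²/n for every n ≥ 1; in particular Q_n converges to the constant T in L²(P) as n → ∞ (the quadratic variation of Brownian motion on [0,T] equals T). -/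
open Filter Topology MeasureTheory ProbabilityTheory NNReal
open Real

lemma intPowGauss {b : ℝ} (hb : 0 < b) (n : ℕ) :
    Integrable (fun x : ℝ => x ^ n * rexp (-b * x ^ 2)) := by
  have hb2 : (0:ℝ) < b / 2 := by linarith
  have h1 : Integrable (fun x : ℝ => rexp (-b * x ^ 2)) := integrable_exp_neg_mul_sq hb
  have h2 : Integrable (fun x : ℝ => (n.factorial : ℝ) * (2 / b) ^ n * rexp (-(b / 2) * x ^ 2)) :=
    (integrable_exp_neg_mul_sq hb2).const_mul _
  refine (h1.add h2).mono' ?_ ?_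
  · exact ((measurable_id.pow_const n).mul
      (((measurable_id.pow_const 2).const_mul (-b)).exp)).aestronglyMeasurable
  · filter_upwards with x
    have hx2 : (0:ℝ) ≤ x ^ 2 := sq_nonneg x
    have hfact : (0:ℝ) < (n.factorial : ℝ) := by positivity
    have hkey : (x ^ 2) ^ n ≤ (n.factorial : ℝ) * (2 / b) ^ n * rexp ((b / 2) * x ^ 2) := by
      have h := Real.pow_div_factorial_le_exp (x := b / 2 * x ^ 2) (by positivity) n
      rw [div_le_iff₀ hfact] at h
      have hinv : (2 / b) ^ n * (b / 2) ^ n = 1 := by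
        rw [← mul_pow]; rw [show (2 / b) * (b / 2) = 1 by field_simp]; simp
      calc (x ^ 2) ^ n = (2 / b) ^ n * ((b / 2 * x ^ 2) ^ n) := by
            rw [mul_pow, ← mul_assoc, hinv, one_mul]
        _ ≤ (2 / b) ^ n * (rexp (b / 2 * x ^ 2) * (n.factorial : ℝ)) := by
            apply mul_le_mul_of_nonneg_left h (by positivity)
        _ = (n.factorial : ℝ) * (2 / b) ^ n * rexp (b / 2 * x ^ 2) := by ring
    have habs : |x| ^ n ≤ 1 + (x ^ 2) ^ n := by
      rcases le_total |x| 1 with h | h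
      · have := pow_le_one₀ (n := n) (abs_nonneg x) h
        have h2 : (0:ℝ) ≤ (x ^ 2) ^ n := by positivity
        linarith
      · have h1 : |x| ^ n ≤ |x| ^ (2 * n) := pow_le_pow_right₀ h (by omega)
        have h2 : |x| ^ (2 * n) = (x ^ 2) ^ n := by
          rw [pow_mul, sq_abs]
        nlinarith [pow_nonneg (abs_nonneg x) n]
    have hnorm : ‖x ^ n * rexp (-b * x ^ 2)‖ = |x| ^ n * rexp (-b * x ^ 2) := by
      rw [norm_mul, norm_pow, Real.norm_eq_abs, Real.norm_eq_abs,
        abs_of_pos (exp_pos _)]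
    rw [hnorm]
    have hexp : rexp (b / 2 * x ^ 2) * rexp (-b * x ^ 2) = rexp (-(b / 2) * x ^ 2) := by
      rw [← Real.exp_add]; ring_nf
    calc |x| ^ n * rexp (-b * x ^ 2) ≤ (1 + (x ^ 2) ^ n) * rexp (-b * x ^ 2) := by
          apply mul_le_mul_of_nonneg_right habs (exp_pos _).le
      _ ≤ rexp (-b * x ^ 2) + (n.factorial : ℝ) * (2 / b) ^ n * rexp (b / 2 * x ^ 2) * rexp (-b * x ^ 2) := by
          rw [add_mul, one_mul]
          have := mul_le_mul_of_nonneg_right hkey (exp_pos (-b * x ^ 2)).le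
          linarith
      _ = rexp (-b * x ^ 2) + (n.factorial : ℝ) * (2 / b) ^ n * rexp (-(b / 2) * x ^ 2) := by
          rw [mul_assoc, hexp]

lemma gaussRec {b : ℝ} (hb : 0 < b) (k : ℕ) :
    ∫ x : ℝ, x ^ (k + 2) * rexp (-b * x ^ 2) =
      ((k + 1 : ℝ) / (2 * b)) * ∫ x : ℝ, x ^ k * rexp (-b * x ^ 2) := by
  have hu : ∀ x : ℝ, HasDerivAt (fun y : ℝ => y ^ (k + 1)) (((k : ℝ) + 1) * x ^ k) x := by
    intro x
    simpa using hasDerivAt_pow (k + 1) x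
  have hv : ∀ x : ℝ, HasDerivAt (fun y : ℝ => rexp (-b * y ^ 2))
      ((-2 * b * x) * rexp (-b * x ^ 2)) x := by
    intro x
    have h1 : HasDerivAt (fun y : ℝ => -b * y ^ 2) (-b * (2 * x)) x := by
      simpa using (hasDerivAt_pow 2 x).const_mul (-b)
    have := h1.exp
    convert this using 1
    ring
  have huv' : Integrable ((fun y : ℝ => y ^ (k + 1)) *
      fun x : ℝ => (-2 * b * x) * rexp (-b * x ^ 2)) := by
    have e : ((fun y : ℝ => y ^ (k + 1)) * fun x : ℝ => (-2 * b * x) * rexp (-b * x ^ 2))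
        = fun x : ℝ => (-2 * b) * (x ^ (k + 2) * rexp (-b * x ^ 2)) := by
      funext x; simp only [Pi.mul_apply]; ring
    rw [e]
    exact (intPowGauss hb (k + 2)).const_mul _
  have hu'v : Integrable ((fun x : ℝ => ((k : ℝ) + 1) * x ^ k) *
      fun x : ℝ => rexp (-b * x ^ 2)) := by
    have e : ((fun x : ℝ => ((k : ℝ) + 1) * x ^ k) * fun x : ℝ => rexp (-b * x ^ 2))
        = fun x : ℝ => ((k : ℝ) + 1) * (x ^ k * rexp (-b * x ^ 2)) := by
      funext x; simp only [Pi.mul_apply]; ring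
    rw [e]
    exact (intPowGauss hb k).const_mul _
  have huv : Integrable ((fun y : ℝ => y ^ (k + 1)) * fun x : ℝ => rexp (-b * x ^ 2)) := by
    have e : ((fun y : ℝ => y ^ (k + 1)) * fun x : ℝ => rexp (-b * x ^ 2))
        = fun x : ℝ => x ^ (k + 1) * rexp (-b * x ^ 2) := by
      funext x; simp only [Pi.mul_apply]
    rw [e]
    exact intPowGauss hb (k + 1)
  have hibp := integral_mul_deriv_eq_deriv_mul_of_integrable (fun x _ => hu x) (fun x _ => hv x) huv' hu'v huv
  have hL : ∫ x : ℝ, x ^ (k + 1) * ((-2 * b * x) * rexp (-b * x ^ 2))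
      = (-2 * b) * ∫ x : ℝ, x ^ (k + 2) * rexp (-b * x ^ 2) := by
    rw [← integral_const_mul]
    congr 1; funext x; ring
  have hR : ∫ x : ℝ, (((k : ℝ) + 1) * x ^ k) * rexp (-b * x ^ 2)
      = ((k : ℝ) + 1) * ∫ x : ℝ, x ^ k * rexp (-b * x ^ 2) := by
    rw [← integral_const_mul]
    congr 1; funext x; ring
  rw [hL, hR] at hibp
  have hb' : (2 : ℝ) * b ≠ 0 := by positivity
  rw [div_mul_eq_mul_div, eq_div_iff hb']
  linarith [hibp]

lemma gaussianPDF_eq_coe (v : ℝ≥0) : gaussianPDF 0 v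
    = fun x => ((Real.toNNReal (gaussianPDFReal 0 v x) : ℝ≥0) : ENNReal) := rfl

lemma pdf_mul_eq {v : ℝ≥0} (hv : v ≠ 0) (g : ℝ → ℝ) (x : ℝ) :
    gaussianPDFReal 0 v x * g x
      = (Real.sqrt (2 * π * v))⁻¹ * (g x * rexp (-(2 * (v:ℝ))⁻¹ * x ^ 2)) := by
  have hv' : (0:ℝ) < v := lt_of_le_of_ne v.coe_nonneg (by exact_mod_cast hv.symm)
  rw [gaussianPDFReal]
  have : -(x - 0) ^ 2 / (2 * (v:ℝ)) = -(2 * (v:ℝ))⁻¹ * x ^ 2 := by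
    field_simp
    ring
  rw [this]; ring

lemma integrable_pow_gaussianReal {v : ℝ≥0} (hv : v ≠ 0) (k : ℕ) :
    Integrable (fun x : ℝ => x ^ k) (gaussianReal 0 v) := by
  have hv' : (0:ℝ) < v := lt_of_le_of_ne v.coe_nonneg (by exact_mod_cast hv.symm)
  have hb : (0:ℝ) < (2 * (v:ℝ))⁻¹ := by positivity
  rw [gaussianReal_of_var_ne_zero 0 hv, gaussianPDF_eq_coe,
    integrable_withDensity_iff_integrable_coe_smul
      (measurable_gaussianPDFReal 0 v).real_toNNReal]
  have e : (fun x : ℝ => ((Real.toNNReal (gaussianPDFReal 0 v x) : ℝ≥0) : ℝ) • (x ^ k))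
      = fun x : ℝ => (Real.sqrt (2 * π * v))⁻¹ * (x ^ k * rexp (-(2 * (v:ℝ))⁻¹ * x ^ 2)) := by
    funext x
    rw [smul_eq_mul, Real.coe_toNNReal _ (gaussianPDFReal_nonneg 0 v x)]
    exact pdf_mul_eq hv (fun y => y ^ k) x
  rw [e]
  exact (intPowGauss hb k).const_mul _

lemma integral_fun_gaussianReal {v : ℝ≥0} (hv : v ≠ 0) (g : ℝ → ℝ) :
    ∫ x, g x ∂(gaussianReal 0 v) = ∫ x, gaussianPDFReal 0 v x * g x := by
  rw [gaussianReal_of_var_ne_zero 0 hv, gaussianPDF_eq_coe,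
    integral_withDensity_eq_integral_smul (measurable_gaussianPDFReal 0 v).real_toNNReal g]
  congr 1
  funext x
  rw [NNReal.smul_def, smul_eq_mul, Real.coe_toNNReal _ (gaussianPDFReal_nonneg 0 v x)]

lemma sqrt_ne {v : ℝ≥0} (hv : v ≠ 0) : Real.sqrt (2 * π * v) ≠ 0 := by
  have hv' : (0:ℝ) < v := lt_of_le_of_ne v.coe_nonneg (by exact_mod_cast hv.symm)
  have : (0:ℝ) < 2 * π * v := by positivity
  positivity

lemma pi_div_b {v : ℝ≥0} (hv : v ≠ 0) : π / (2 * (v:ℝ))⁻¹ = 2 * π * v := by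
  have hv' : (0:ℝ) < v := lt_of_le_of_ne v.coe_nonneg (by exact_mod_cast hv.symm)
  field_simp

lemma gauss_sq {v : ℝ≥0} (hv : v ≠ 0) : ∫ x, x ^ 2 ∂(gaussianReal 0 v) = v := by
  have hv' : (0:ℝ) < v := lt_of_le_of_ne v.coe_nonneg (by exact_mod_cast hv.symm)
  set b : ℝ := (2 * (v:ℝ))⁻¹ with hb
  have hbpos : (0:ℝ) < b := by positivity
  rw [integral_fun_gaussianReal hv]
  calc ∫ x, gaussianPDFReal 0 v x * x ^ 2
      = ∫ x, (Real.sqrt (2 * π * v))⁻¹ * (x ^ 2 * rexp (-b * x ^ 2)) := by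
        congr 1; funext x; exact pdf_mul_eq hv (fun y => y ^ 2) x
    _ = (Real.sqrt (2 * π * v))⁻¹ * ∫ x, x ^ 2 * rexp (-b * x ^ 2) := integral_const_mul _ _
    _ = (Real.sqrt (2 * π * v))⁻¹ * ((1 / (2 * b)) * ∫ x : ℝ, x ^ 0 * rexp (-b * x ^ 2)) := by
        rw [show (2:ℕ) = 0 + 2 by rfl, gaussRec hbpos 0]; norm_num
    _ = v := by
        have h0 : ∫ x : ℝ, x ^ 0 * rexp (-b * x ^ 2) = Real.sqrt (2 * π * v) := by
          simp only [pow_zero, one_mul]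
          rw [integral_gaussian, pi_div_b hv]
        rw [h0]
        have h1 : 1 / (2 * b) = (v:ℝ) := by rw [hb]; field_simp
        rw [h1]
        field_simp [sqrt_ne hv]

lemma gauss_four {v : ℝ≥0} (hv : v ≠ 0) : ∫ x, x ^ 4 ∂(gaussianReal 0 v) = 3 * (v:ℝ) ^ 2 := by
  have hv' : (0:ℝ) < v := lt_of_le_of_ne v.coe_nonneg (by exact_mod_cast hv.symm)
  set b : ℝ := (2 * (v:ℝ))⁻¹ with hb
  have hbpos : (0:ℝ) < b := by positivity
  rw [integral_fun_gaussianReal hv]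
  calc ∫ x, gaussianPDFReal 0 v x * x ^ 4
      = ∫ x, (Real.sqrt (2 * π * v))⁻¹ * (x ^ 4 * rexp (-b * x ^ 2)) := by
        congr 1; funext x; exact pdf_mul_eq hv (fun y => y ^ 4) x
    _ = (Real.sqrt (2 * π * v))⁻¹ * ∫ x, x ^ 4 * rexp (-b * x ^ 2) := integral_const_mul _ _
    _ = (Real.sqrt (2 * π * v))⁻¹ * (((2 + 1 : ℝ) / (2 * b)) * ((1 / (2 * b)) *
          ∫ x : ℝ, x ^ 0 * rexp (-b * x ^ 2))) := by
        rw [show (4:ℕ) = 2 + 2 by rfl, gaussRec hbpos 2,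
          show (2:ℕ) = 0 + 2 by rfl, gaussRec hbpos 0]
        norm_num
    _ = 3 * (v:ℝ) ^ 2 := by
        have h0 : ∫ x : ℝ, x ^ 0 * rexp (-b * x ^ 2) = Real.sqrt (2 * π * v) := by
          simp only [pow_zero, one_mul]
          rw [integral_gaussian, pi_div_b hv]
        rw [h0]
        have h1 : 1 / (2 * b) = (v:ℝ) := by rw [hb]; field_simp
        have h2 : (2 + 1 : ℝ) / (2 * b) = 3 * (v:ℝ) := by rw [hb]; field_simp; ring
        rw [h1, h2]
        field_simp [sqrt_ne hv]

/-- The quadratic variation of Brownian motion on `[0,T]` equals `T` in `L²`: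
`E[(Q_n − T)²] = 2T²/n`, and `Q_n → T` in `L²(P)`. -/
theorem brownian_quadratic_variation {Ω : Type*} [MeasurableSpace Ω]
    (P : Measure Ω) [IsProbabilityMeasure P] (W : ℝ≥0 → Ω → ℝ)
    (hincr : ∀ s t : ℝ≥0, s ≤ t →
      Measure.map (fun ω => W t ω - W s ω) P = gaussianReal 0 (t - s))
    (hindep : ∀ (n : ℕ) (ts : Fin (n + 1) → ℝ≥0), Monotone ts →
      iIndepFun
        (fun i : Fin n => fun ω => W (ts i.succ) ω - W (ts i.castSucc) ω) P)
    (T : ℝ≥0) (hT : 0 < T)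
    (Q : ℕ → Ω → ℝ)
    (hQ : ∀ n ω, Q n ω =
      ∑ j ∈ Finset.range n, (W ((j + 1) * T / n) ω - W (j * T / n) ω) ^ 2) :
    (∀ n : ℕ, 1 ≤ n → (∫ ω, (Q n ω - (T : ℝ)) ^ 2 ∂P) = 2 * (T : ℝ) ^ 2 / n) ∧
    Tendsto (fun n : ℕ => ∫ ω, (Q n ω - (T : ℝ)) ^ 2 ∂P) atTop (𝓝 0) := by
  have key : ∀ n : ℕ, 1 ≤ n → (∫ ω, (Q n ω - (T : ℝ)) ^ 2 ∂P) = 2 * (T : ℝ) ^ 2 / n := by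
    intro n hn
    have hn0 : (n : ℝ) ≠ 0 := Nat.cast_ne_zero.mpr (by omega)
    have hnn0 : ((n : ℕ) : ℝ≥0) ≠ 0 := Nat.cast_ne_zero.mpr (by omega)
    set c : ℝ := (T : ℝ) / n with hc
    set vn : ℝ≥0 := T / n with hvn
    have hvn0 : vn ≠ 0 := by
      rw [hvn]
      simp [div_eq_zero_iff, hT.ne', hnn0]
    have hcast : ((vn : ℝ≥0) : ℝ) = c := by
      rw [hvn, hc, NNReal.coe_div]
      norm_num
    set ts : Fin (n + 1) → ℝ≥0 := fun i => (i : ℕ) * T / n with hts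
    have hmono : Monotone ts := by
      intro i j hij
      rw [hts]
      dsimp only
      gcongr
      exact_mod_cast hij
    set X : Fin n → Ω → ℝ := fun i ω => W (ts i.succ) ω - W (ts i.castSucc) ω with hX
    have hts_le : ∀ i : Fin n, ts i.castSucc ≤ ts i.succ := fun i =>
      hmono (Fin.castSucc_le_succ i)
    have hdiff : ∀ i : Fin n, ts i.succ - ts i.castSucc = vn := by
      intro i
      rw [hts, hvn]
      dsimp only
      rw [Fin.val_succ, Fin.coe_castSucc, ← NNReal.sub_div]
      congr 1
      push_cast
      rw [add_mul, one_mul, add_tsub_cancel_left]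
    have hlaw : ∀ i : Fin n, Measure.map (X i) P = gaussianReal 0 vn := by
      intro i
      rw [hX]
      rw [hincr _ _ (hts_le i), hdiff i]
    have hXae : ∀ i, AEMeasurable (X i) P := by
      intro i
      by_contra h
      have h0 := Measure.map_of_not_aemeasurable h
      rw [hlaw i] at h0
      exact IsProbabilityMeasure.ne_zero (gaussianReal 0 vn) h0
    have hint : ∀ (i : Fin n) (k : ℕ), Integrable (fun ω => (X i ω) ^ k) P := by
      intro i k
      have h1 : Integrable (fun x : ℝ => x ^ k) (Measure.map (X i) P) := by
        rw [hlaw i]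
        exact integrable_pow_gaussianReal hvn0 k
      have h2 := (integrable_map_measure
        (by rw [hlaw i]
            exact (measurable_id.pow_const k).aestronglyMeasurable) (hXae i)).mp h1
      exact h2
    have hmom2 : ∀ i, ∫ ω, (X i ω) ^ 2 ∂P = c := by
      intro i
      have h := integral_map (hXae i) (f := fun x : ℝ => x ^ 2)
        (by rw [hlaw i]; exact (measurable_id.pow_const 2).aestronglyMeasurable)
      rw [← h, hlaw i, gauss_sq hvn0, hcast]
    have hmom4 : ∀ i, ∫ ω, (X i ω) ^ 4 ∂P = 3 * c ^ 2 := by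
      intro i
      have h := integral_map (hXae i) (f := fun x : ℝ => x ^ 4)
        (by rw [hlaw i]; exact (measurable_id.pow_const 4).aestronglyMeasurable)
      rw [← h, hlaw i, gauss_four hvn0, hcast]
    set Y : Fin n → Ω → ℝ := fun i ω => (X i ω) ^ 2 - c with hY
    have hYint : ∀ i, Integrable (Y i) P := fun i => (hint i 2).sub (integrable_const c)
    have hYmean : ∀ i, ∫ ω, Y i ω ∂P = 0 := by
      intro i
      rw [hY]
      dsimp only
      rw [integral_sub (hint i 2) (integrable_const c), hmom2 i, integral_const]
      simp
    have hYe : ∀ i, (fun ω => Y i ω * Y i ω)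
        = fun ω => (X i ω) ^ 4 - (2 * c) * (X i ω) ^ 2 + c ^ 2 := by
      intro i
      funext ω
      rw [hY]
      dsimp only
      ring
    have hYsq_int : ∀ i, Integrable (fun ω => Y i ω * Y i ω) P := by
      intro i
      rw [hYe i]
      exact (((hint i 4).sub ((hint i 2).const_mul _)).add (integrable_const _))
    have hYsq : ∀ i, ∫ ω, Y i ω * Y i ω ∂P = 2 * c ^ 2 := by
      intro i
      have hi2m : Integrable (fun ω => (2 * c) * (X i ω) ^ 2) P := (hint i 2).const_mul _
      have hi42 : Integrable (fun ω => (X i ω) ^ 4 - (2 * c) * (X i ω) ^ 2) P :=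
        (hint i 4).sub hi2m
      rw [hYe i]
      rw [integral_add hi42 (integrable_const _), integral_sub (hint i 4) hi2m, hmom4 i,
        integral_const_mul, hmom2 i, integral_const]
      simp
      ring
    have hYindep : ∀ i j, i ≠ j → IndepFun (Y i) (Y j) P := by
      intro i j hij
      have h0 : IndepFun (X i) (X j) P := (hindep n ts hmono).indepFun hij
      have h1 := h0.comp (φ := fun x : ℝ => x ^ 2 - c) (ψ := fun x : ℝ => x ^ 2 - c)
        ((measurable_id.pow_const 2).sub measurable_const)
        ((measurable_id.pow_const 2).sub measurable_const)
      exact h1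
    have hYam : ∀ k, AEStronglyMeasurable (Y k) P := fun k =>
      (((hXae k).pow_const 2).sub aemeasurable_const).aestronglyMeasurable
    have hcross : ∀ i j, i ≠ j → ∫ ω, Y i ω * Y j ω ∂P = 0 := by
      intro i j hij
      have h := (hYindep i j hij).integral_mul_eq_mul_integral (hYam i) (hYam j)
      have h2 : ∫ ω, Y i ω * Y j ω ∂P = (∫ ω, Y i ω ∂P) * ∫ ω, Y j ω ∂P := h
      rw [h2, hYmean i, hYmean j, mul_zero]
    have hprod_int : ∀ i j : Fin n, Integrable (fun ω => Y i ω * Y j ω) P := by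
      intro i j
      rcases eq_or_ne i j with rfl | hij
      · exact hYsq_int i
      · exact (hYindep i j hij).integrable_mul (hYint i) (hYint j)
    have hQrw : (fun ω => (Q n ω - (T : ℝ)) ^ 2)
        = fun ω => ∑ i : Fin n, ∑ j : Fin n, Y i ω * Y j ω := by
      funext ω
      have h1 : Q n ω - (T : ℝ) = ∑ i : Fin n, Y i ω := by
        rw [hQ n ω, hY]
        dsimp only
        rw [Finset.sum_sub_distrib, Finset.sum_const, Finset.card_univ, Fintype.card_fin,
          nsmul_eq_mul, hc, mul_div_cancel₀ _ hn0]
        congr 1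
        rw [← Fin.sum_univ_eq_sum_range
          (fun j => (W ((j + 1) * T / n) ω - W (j * T / n) ω) ^ 2) n]
        refine Finset.sum_congr rfl fun i _ => ?_
        rw [hX, hts]
        dsimp only
        rw [Fin.val_succ, Fin.coe_castSucc]
        norm_cast
      rw [h1, sq, Finset.sum_mul_sum]
    calc ∫ ω, (Q n ω - (T : ℝ)) ^ 2 ∂P
        = ∫ ω, ∑ i : Fin n, ∑ j : Fin n, Y i ω * Y j ω ∂P := by rw [hQrw]
      _ = ∑ i : Fin n, ∑ j : Fin n, ∫ ω, Y i ω * Y j ω ∂P := by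
          rw [integral_finset_sum _
            (fun i _ => integrable_finset_sum _ (fun j _ => hprod_int i j))]
          exact Finset.sum_congr rfl fun i _ =>
            integral_finset_sum _ (fun j _ => hprod_int i j)
      _ = ∑ _i : Fin n, 2 * c ^ 2 := by
          refine Finset.sum_congr rfl fun i _ => ?_
          rw [Finset.sum_eq_single i]
          · exact hYsq i
          · intro j _ hji
            exact hcross i j (Ne.symm hji)
          · intro h
            exact absurd (Finset.mem_univ i) h
      _ = 2 * (T : ℝ) ^ 2 / n := by
          rw [Finset.sum_const, Finset.card_univ, Fintype.card_fin, nsmul_eq_mul, hc]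
          field_simp
  refine ⟨key, ?_⟩
  have heq : (fun n : ℕ => ∫ ω, (Q n ω - (T : ℝ)) ^ 2 ∂P)
      =ᶠ[atTop] fun n : ℕ => 2 * (T : ℝ) ^ 2 / n := by
    filter_upwards [eventually_ge_atTop 1] with n hn using key n hn
  exact Tendsto.congr' heq.symm (tendsto_const_div_atTop_nhds_zero_nat _)
end
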